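/- Let L be a symmetric Latin square of order n and let P be its group of principal autotopisms. Then: (a) every (α,β,ε) ∈ P satisfies β = α⁻¹; (b) P is abelian (any two principal autotopisms of L commute); and (c) for every (α,β,ε) ∈ P, the order of the permutation α divides n. -/

import Mathlib

/-- A Latin square of order `n`: each row and each column is a bijection. -/
def IsLatin {n : ℕ} (L : Fin n → Fin n → Fin n) : Prop :=
  (∀ i, Function.Bijective (L i)) ∧ (∀ j, Function.Bijective fun i => L i j)

/-- `L` is symmetric: `L(i,j) = L(j,i)`. -/
def IsSymmetric {n : ℕ} (L : Fin n → Fin n → Fin n) : Prop :=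
  ∀ i j, L i j = L j i

/-- `L` is semisymmetric: `L(i,j) = k → L(j,k) = i`. -/
def IsSemisymmetric {n : ℕ} (L : Fin n → Fin n → Fin n) : Prop :=
  ∀ i j, L j (L i j) = i

/-- Totally symmetric: symmetric and semisymmetric. -/
def IsTotallySymmetric {n : ℕ} (L : Fin n → Fin n → Fin n) : Prop :=
  IsSymmetric L ∧ IsSemisymmetric L

/-- Reduced: the first row and first column are in natural order. -/
def IsReducedLS {n : ℕ} (L : Fin n → Fin n → Fin n) : Prop :=
  ∀ i j : Fin n, ((i : ℕ) = 0 → L i j = j) ∧ ((j : ℕ) = 0 → L i j = i)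

/-- Idempotent: `L(i,i) = i` for all `i`. -/
def IsIdempotent {n : ℕ} (L : Fin n → Fin n → Fin n) : Prop :=
  ∀ i, L i i = i

/-- Unipotent: all diagonal entries are equal. -/
def IsUnipotent {n : ℕ} (L : Fin n → Fin n → Fin n) : Prop :=
  ∀ i j, L i i = L j j

/-- `B` is isotopic to `A`: `B = A(α,β,γ)`. -/
def Isotopic {n : ℕ} (A B : Fin n → Fin n → Fin n) : Prop :=
  ∃ α β γ : Equiv.Perm (Fin n), ∀ i j, B (α i) (β j) = γ (A i j)

/-- `B` is rrs-isotopic to `A`: `B = A(α,α,γ)`. -/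
def RrsIsotopic {n : ℕ} (A B : Fin n → Fin n → Fin n) : Prop :=
  ∃ α γ : Equiv.Perm (Fin n), ∀ i j, B (α i) (α j) = γ (A i j)

/-- `B` is isomorphic to `A`: `B = A(α,α,α)`. -/
def Isomorphic {n : ℕ} (A B : Fin n → Fin n → Fin n) : Prop :=
  ∃ α : Equiv.Perm (Fin n), ∀ i j, B (α i) (α j) = α (A i j)

/-- `B` is one of the six conjugates of `A`, obtained by uniformly permuting
the coordinates of the triples `(i, j, A i j)`. -/
def IsConjugate {n : ℕ} (A B : Fin n → Fin n → Fin n) : Prop :=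
  (∀ i j, B i j = A i j) ∨ (∀ i j, B j i = A i j) ∨
  (∀ i j, B (A i j) j = i) ∨ (∀ i j, B i (A i j) = j) ∨
  (∀ i j, B j (A i j) = i) ∨ (∀ i j, B (A i j) i = j)

/-- `B` is paratopic to `A`: `B` is isotopic to some conjugate of `A`. -/
def Paratopic {n : ℕ} (A B : Fin n → Fin n → Fin n) : Prop :=
  ∃ C : Fin n → Fin n → Fin n, IsConjugate A C ∧ Isotopic C B

/-- `(α, β, ε)` is a principal autotopism of `L`. -/
def IsPrincipalAutotopism {n : ℕ} (L : Fin n → Fin n → Fin n)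
    (α β : Equiv.Perm (Fin n)) : Prop :=
  ∀ i j, L (α i) (β j) = L i j

lemma pa_inv {n : ℕ} (L : Fin n → Fin n → Fin n)
    (hL : IsLatin L) (hs : IsSymmetric L) (α β : Equiv.Perm (Fin n))
    (h : IsPrincipalAutotopism L α β) : β = α⁻¹ := by
  have key : ∀ i, α i = β⁻¹ i := by
    intro i
    have h1 : L (α i) i = L (β⁻¹ i) i := by
      have := h i (β⁻¹ i)
      rw [← Equiv.Perm.mul_apply, mul_inv_cancel, Equiv.Perm.one_apply] at this
      rw [this, hs]
    exact (hL.2 i).injective h1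
  apply Equiv.ext
  intro x
  have h1 := key (α⁻¹ x)
  rw [← Equiv.Perm.mul_apply, mul_inv_cancel, Equiv.Perm.one_apply] at h1
  calc β x = β (β⁻¹ (α⁻¹ x)) := by rw [← h1]
    _ = α⁻¹ x := by rw [← Equiv.Perm.mul_apply, mul_inv_cancel, Equiv.Perm.one_apply]

lemma pa_pow {n : ℕ} (L : Fin n → Fin n → Fin n)
    (hL : IsLatin L) (hs : IsSymmetric L) (α β : Equiv.Perm (Fin n))
    (h : IsPrincipalAutotopism L α β) (d : ℕ) (i : Fin n)
    (hfix : (α ^ d) i = i) : orderOf α ∣ d := by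
  have hβ := pa_inv L hL hs α β h
  subst hβ
  have hstep : ∀ i j, L (α i) j = L i (α j) := by
    intro i j
    have := h i (α j)
    rwa [← Equiv.Perm.mul_apply, inv_mul_cancel, Equiv.Perm.one_apply] at this
  have hpow : ∀ (d : ℕ) (i j : Fin n), L ((α ^ d) i) j = L i ((α ^ d) j) := by
    intro d
    induction d with
    | zero => simp
    | succ d ih =>
      intro i j
      rw [pow_succ, Equiv.Perm.mul_apply, Equiv.Perm.mul_apply, ih, hstep]
      simp [← Equiv.Perm.mul_apply, ← pow_succ, ← pow_succ']
  apply orderOf_dvd_of_pow_eq_one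
  ext j
  have : L i j = L i ((α ^ d) j) := by rw [← hpow, hfix]
  have := (hL.1 i).injective this
  simp [← this]


theorem stmt17 {n : ℕ} (L : Fin n → Fin n → Fin n)
    (hL : IsLatin L) (hs : IsSymmetric L) :
    (∀ α β : Equiv.Perm (Fin n), IsPrincipalAutotopism L α β → β = α⁻¹) ∧
    (∀ α β α' β' : Equiv.Perm (Fin n), IsPrincipalAutotopism L α β →
        IsPrincipalAutotopism L α' β' → α * α' = α' * α ∧ β * β' = β' * β) ∧
    (∀ α β : Equiv.Perm (Fin n), IsPrincipalAutotopism L α β → orderOf α ∣ n) := by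
  refine ⟨fun α β h => pa_inv L hL hs α β h, ?_, ?_⟩
  · intro α β α' β' h h'
    have hmul : IsPrincipalAutotopism L (α * α') (β * β') := by
      intro i j
      simp only [Equiv.Perm.mul_apply]
      rw [h, h']
    have h1 := pa_inv L hL hs α β h
    have h2 := pa_inv L hL hs α' β' h'
    have h3 := pa_inv L hL hs _ _ hmul
    subst h1; subst h2
    rw [mul_inv_rev] at h3
    constructor
    · have := congrArg (·⁻¹) h3
      simpa [mul_inv_rev] using this.symm
    · rw [h3]
  · intro α β h
    by_cases hm : orderOf α = 1
    · simp [hm]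
    · -- no fixed points
      have hnofix : ∀ x : Fin n, α x ≠ x := by
        intro x hx
        have : (α ^ 1) x = x := by simpa using hx
        have := pa_pow L hL hs α β h 1 x this
        exact hm (Nat.dvd_one.mp this)
      have hsupp : α.support = Finset.univ := by
        ext x; simp [Equiv.Perm.mem_support, hnofix x]
      have hcard : α.support.card = n := by simp [hsupp]
      suffices hdvd : orderOf α ∣ α.support.card by rwa [hcard] at hdvd
      rw [← Equiv.Perm.sum_cycleType]
      apply Multiset.dvd_sum
      intro d hd
      rw [Equiv.Perm.cycleType_def, Multiset.mem_map] at hd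
      obtain ⟨c, hc, rfl⟩ := hd
      have hc' : c ∈ α.cycleFactorsFinset := hc
      have hcyc : c.IsCycle := (Equiv.Perm.mem_cycleFactorsFinset_iff.mp hc').1
      obtain ⟨x, hx⟩ := hcyc.nonempty_support
      have hceq : c = α.cycleOf x := Equiv.Perm.cycle_is_cycleOf hx hc'
      have hfix : (α ^ (Function.comp Finset.card Equiv.Perm.support c)) x = x := by
        have := Equiv.Perm.pow_mod_card_support_cycleOf_self_apply α (c.support.card) x
        rw [← hceq, Nat.mod_self, pow_zero] at this
        simpa [Function.comp] using this.symm
      exact pa_pow L hL hs α β h _ x hfix
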